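/- arXiv:1805.11536 — 3 statements merged into one kernel-verified Lean document; each statement's English description precedes it below -/
import Mathlib

section
/- Let R be a commutative ring, n an integer with n < −1, and (X, δ) a (non-counital) comonoid in chain complexes of R-modules, with comultiplication δ : X → X ⊗ X. Define δ_n : L_nX → L_nX ⊗ L_nX on homogeneous elements by δ_n(x) = (q_n ⊗ q_n)(δ x) if |x| ≤ n and δ_n(x) = 0 if |x| ≥ n+1, where q_n : X → L_nX is the truncation quotient map. Then δ_n is a well-defined chain map, the square q_n-then-δ_n equals δ-then-(q_n ⊗ q_n), and δ_n is coassociative, i.e., (δ_n ⊗ id)δ_n = (id ⊗ δ_n)δ_n. -/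
set_option maxHeartbeats 1000000


/-!
STATEMENT 3: Let `R` be a commutative ring, `n < -1`, and `(X, δ)` a non-counital
comonoid in chain complexes of `R`-modules.  We work degreewise: the comultiplication
`δ : X → X ⊗ X` is given by its components `δ i j : X_{i+j} → X_i ⊗ X_j`, required to be
a chain map (Koszul sign rule) and coassociative.  `L = L_n X` is the homological
truncation above `n` together with the quotient chain map `q = q_n : X → L`,
characterized degreewise as in the paper: `q` is surjective, bijective in degrees `≤ n`,
has kernel `ker d_{n+1}` in degree `n+1`, and `L` vanishes above `n+1`.  Conclusion:
there is a well-defined chain map `δ_n : L → L ⊗ L` given by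
`δ_n x = (q ⊗ q)(δ x)` for `|x| ≤ n` and `δ_n x = 0` for `|x| ≥ n+1` (these two clauses
are encoded by the commuting square `q ≫ δ_n = δ ≫ (q ⊗ q)` — which, `q` being
degreewise surjective, uniquely determines `δ_n` — together with the vanishing of the
components of `δ_n` in total degrees `≥ n+1`), and `δ_n` is coassociative.
-/

open CategoryTheory Limits MonoidalCategory

theorem truncation_of_chain_comonoid
    (R : Type) [CommRing R]
    (n : ℤ) (hn : n < -1)
    (X L : ChainComplex (ModuleCat R) ℤ)
    -- the truncation map `q_n : X ⟶ L_n X`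
    (q : X ⟶ L)
    (hsurj : ∀ i : ℤ, Function.Surjective (q.f i))
    (hbij : ∀ i ≤ n, Function.Bijective (q.f i))
    (hker : LinearMap.ker (q.f (n + 1)).hom = LinearMap.ker (X.d (n + 1) n).hom)
    (hzero : ∀ i > n + 1, IsZero (L.X i))
    -- the components of the comultiplication `δ : X ⟶ X ⊗ X`
    (δ : ∀ i j : ℤ, X.X (i + j) ⟶ X.X i ⊗ X.X j)
    -- `δ` is a chain map (Koszul sign rule)
    (hδchain : ∀ i j : ℤ,
      X.d (i + 1 + j) (i + j) ≫ δ i j =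
        (X.XIsoOfEq (show i + 1 + j = (i + 1) + j by ring)).hom ≫ δ (i + 1) j ≫
            (X.d (i + 1) i ▷ X.X j) +
          (((-1 : ℤˣ) ^ i : ℤˣ) : ℤ) •
            ((X.XIsoOfEq (show i + 1 + j = i + (j + 1) by ring)).hom ≫ δ i (j + 1) ≫
              (X.X i ◁ X.d (j + 1) j)))
    -- `δ` is coassociative
    (hδcoassoc : ∀ i j k : ℤ,
      (X.XIsoOfEq (show i + j + k = (i + j) + k by ring)).hom ≫ δ (i + j) k ≫
          (δ i j ▷ X.X k) =
        (X.XIsoOfEq (show i + j + k = i + (j + k) by ring)).hom ≫ δ i (j + k) ≫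
          (X.X i ◁ δ j k) ≫ (α_ (X.X i) (X.X j) (X.X k)).inv) :
    -- Conclusion: the truncated comultiplication `δ_n` exists, is determined by the
    -- formula of the paper, is a chain map, and is coassociative.
    ∃ δn : ∀ i j : ℤ, L.X (i + j) ⟶ L.X i ⊗ L.X j,
      -- the commuting square `q ≫ δ_n = δ ≫ (q ⊗ q)`
      (∀ i j : ℤ, q.f (i + j) ≫ δn i j = δ i j ≫ (q.f i ⊗ₘ q.f j)) ∧
      -- `δ_n = 0` in total degrees `≥ n + 1`
      (∀ i j : ℤ, n + 1 ≤ i + j → δn i j = 0) ∧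
      -- `δ_n` is a chain map
      (∀ i j : ℤ,
        L.d (i + 1 + j) (i + j) ≫ δn i j =
          (L.XIsoOfEq (show i + 1 + j = (i + 1) + j by ring)).hom ≫ δn (i + 1) j ≫
              (L.d (i + 1) i ▷ L.X j) +
            (((-1 : ℤˣ) ^ i : ℤˣ) : ℤ) •
              ((L.XIsoOfEq (show i + 1 + j = i + (j + 1) by ring)).hom ≫ δn i (j + 1) ≫
                (L.X i ◁ L.d (j + 1) j))) ∧
      -- `δ_n` is coassociative
      (∀ i j k : ℤ,
        (L.XIsoOfEq (show i + j + k = (i + j) + k by ring)).hom ≫ δn (i + j) k ≫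
            (δn i j ▷ L.X k) =
          (L.XIsoOfEq (show i + j + k = i + (j + k) by ring)).hom ≫ δn i (j + k) ≫
            (L.X i ◁ δn j k) ≫ (α_ (L.X i) (L.X j) (L.X k)).inv) := by
  classical
  -- In total degree ≥ n+1, the target `L.X i ⊗ L.X j` is zero (here we use `n < -1`).
  have htz : ∀ i j : ℤ, n + 1 ≤ i + j → IsZero (L.X i ⊗ L.X j) := by
    intro i j hij
    rcases le_or_gt i (n + 1) with hi | hi
    · exact Functor.map_isZero (tensorLeft (L.X i)) (hzero j (by omega))
    · exact Functor.map_isZero (tensorRight (L.X j)) (hzero i hi)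
  have hinv : ∀ i : ℤ, i ≤ n → IsIso (q.f i) := fun i hi =>
    (ConcreteCategory.isIso_iff_bijective _).mpr (hbij i hi)
  have hepi : ∀ i : ℤ, Epi (q.f i) := fun i =>
    (ModuleCat.epi_iff_surjective _).mpr (hsurj i)
  have hqiso : ∀ (a b : ℤ) (h : a = b),
      q.f a ≫ (L.XIsoOfEq h).hom = (X.XIsoOfEq h).hom ≫ q.f b := by
    intro a b h; subst h; simp
  have hwr : ∀ {A B A' B' C : ModuleCat R} (f : A ⟶ B) (g : A' ⟶ B') (h : B ⟶ C),
      (f ⊗ₘ g) ≫ (h ▷ B') = (f ≫ h) ⊗ₘ g := by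
    intros; rw [← tensorHom_id, tensorHom_comp_tensorHom, Category.comp_id]
  have hwr2 : ∀ {A B A' B' C : ModuleCat R} (f : A ⟶ B) (g : A' ⟶ B') (h : B ⟶ C),
      ((f ≫ h) ⊗ₘ g) = (f ▷ A') ≫ (h ⊗ₘ g) := by
    intros; rw [← tensorHom_id, tensorHom_comp_tensorHom, Category.id_comp]
  have hwl : ∀ {A B A' B' C : ModuleCat R} (f : A ⟶ B) (g : A' ⟶ B') (h : B' ⟶ C),
      (f ⊗ₘ g) ≫ (B ◁ h) = f ⊗ₘ (g ≫ h) := by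
    intros; rw [← id_tensorHom, tensorHom_comp_tensorHom, Category.comp_id]
  have hwl2 : ∀ {A B A' B' C : ModuleCat R} (f : A ⟶ B) (g : A' ⟶ B') (h : B' ⟶ C),
      (f ⊗ₘ (g ≫ h)) = (A ◁ g) ≫ (f ⊗ₘ h) := by
    intros; rw [← id_tensorHom, tensorHom_comp_tensorHom, Category.id_comp]
  -- the truncated comultiplication
  set δn : ∀ i j : ℤ, L.X (i + j) ⟶ L.X i ⊗ L.X j := fun i j =>
    if h : i + j ≤ n then
      letI := hinv (i + j) h
      inv (q.f (i + j)) ≫ δ i j ≫ (q.f i ⊗ₘ q.f j)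
    else 0 with hδn
  -- the commuting square
  have hsq : ∀ i j : ℤ, q.f (i + j) ≫ δn i j = δ i j ≫ (q.f i ⊗ₘ q.f j) := by
    intro i j
    by_cases h : i + j ≤ n
    · letI := hinv (i + j) h
      simp [hδn, dif_pos h]
    · rw [hδn]; dsimp only; rw [dif_neg h, comp_zero]
      exact ((htz i j (by omega)).eq_of_tgt _ _).symm
  -- vanishing in degrees ≥ n+1
  have hvan : ∀ i j : ℤ, n + 1 ≤ i + j → δn i j = 0 := by
    intro i j hij
    rw [hδn]; dsimp only; rw [dif_neg (by omega : ¬ i + j ≤ n)]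
  -- reassociated auxiliary rewriting lemmas
  have hcomm' : ∀ (a b : ℤ) {T : ModuleCat R} (w : L.X b ⟶ T),
      q.f a ≫ L.d a b ≫ w = X.d a b ≫ q.f b ≫ w := by
    intro a b T w; rw [← Category.assoc, q.comm, Category.assoc]
  have hsq' : ∀ (i j : ℤ) {T : ModuleCat R} (w : L.X i ⊗ L.X j ⟶ T),
      q.f (i + j) ≫ δn i j ≫ w = δ i j ≫ (q.f i ⊗ₘ q.f j) ≫ w := by
    intro i j T w; rw [← Category.assoc, hsq, Category.assoc]
  have hqiso' : ∀ (a b : ℤ) (h : a = b) {T : ModuleCat R} (w : L.X b ⟶ T),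
      q.f a ≫ (L.XIsoOfEq h).hom ≫ w = (X.XIsoOfEq h).hom ≫ q.f b ≫ w := by
    intro a b h T w; rw [← Category.assoc, hqiso, Category.assoc]
  have hwl' : ∀ {A B A' B' C : ModuleCat R} (f : A ⟶ B) (g : A' ⟶ B') (h : B' ⟶ C)
      {T : ModuleCat R} (w : B ⊗ C ⟶ T),
      (f ⊗ₘ g) ≫ (B ◁ h) ≫ w = (f ⊗ₘ (g ≫ h)) ≫ w := by
    intros; rw [← Category.assoc, hwl]
  refine ⟨δn, hsq, hvan, ?_, ?_⟩
  · -- chain map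
    intro i j
    haveI := hepi (i + 1 + j)
    rw [← cancel_epi (q.f (i + 1 + j))]
    conv_lhs => rw [hcomm', hsq, ← Category.assoc, hδchain]
    conv_rhs => rw [Preadditive.comp_add, Preadditive.comp_zsmul,
      hqiso', hsq', hqiso', hsq', hwr, hwl, q.comm, q.comm, hwr2, hwl2]
    simp only [Preadditive.add_comp, Preadditive.zsmul_comp, Category.assoc]
  · -- coassociativity
    intro i j k
    haveI := hepi (i + j + k)
    rw [← cancel_epi (q.f (i + j + k))]
    conv_lhs => rw [hqiso', hsq', hwr, hsq, hwr2]
    conv_rhs => rw [hqiso', hsq', hwl', hsq, hwl2]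
    simp only [Category.assoc]
    conv_rhs => rw [associator_inv_naturality]
    have hc := congrArg (fun t => t ≫ ((q.f i ⊗ₘ q.f j) ⊗ₘ q.f k)) (hδcoassoc i j k)
    simp only [Category.assoc] at hc
    exact hc
end

section
/- Let R be a commutative ring, B a (non-counital) comonoid in chain complexes of R-modules with B_j = 0 for all j ≥ 0, and (M, δ) a right B-comodule with coaction δ : M → M ⊗ B. For any integer n, define δ_n : L_nM → L_nM ⊗ B by δ_n(x) = (q_n ⊗ id_B)(δ x) if |x| ≤ n and δ_n(x) = 0 if |x| ≥ n+1. Then δ_n is a well-defined coassociative right B-coaction on the truncation L_nM, and the quotient map q_n : M → L_nM is a map of right B-comodules. -/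
/-!
STATEMENT 5: Let `R` be a commutative ring, `B` a (non-counital) comonoid in chain
complexes of `R`-modules with `B_j = 0` for all `j ≥ 0`, and `(M, δ)` a right
`B`-comodule.  We work degreewise: the coaction `δ : M → M ⊗ B` has components
`δ i j : M_{i+j} → M_i ⊗ B_j`, is a chain map (Koszul signs), and is coassociative with
respect to the comultiplication `δ_B` of `B`.  For any integer `n`, let `L = L_n M` be
the homological truncation above `n`, with quotient chain map `q = q_n : M → L`
(characterized degreewise as usual).  Conclusion: there is a well-defined coassociative
right `B`-coaction `δ_n : L → L ⊗ B`, given by `δ_n x = (q ⊗ id_B)(δ x)` for `|x| ≤ n`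
and `δ_n x = 0` for `|x| ≥ n+1` (encoded by the commuting square
`q ≫ δ_n = δ ≫ (q ⊗ id_B)` — which, `q` being degreewise surjective, uniquely determines
`δ_n` — together with vanishing of the components of `δ_n` in total degrees `≥ n+1`),
`δ_n` is a chain map, and the square says precisely that `q_n : M → L_n M` is a map of
right `B`-comodules.
-/

open CategoryTheory Limits MonoidalCategory

section Aux

variable {R : Type} [CommRing R]

private lemma isZero_tensor_of_left {X Y : ModuleCat R} (h : IsZero X) : IsZero (X ⊗ Y) := by
  rw [IsZero.iff_id_eq_zero] at h ⊢
  rw [← MonoidalCategory.id_whiskerRight, h, MonoidalPreadditive.zero_whiskerRight]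

private lemma isZero_tensor_of_right {X Y : ModuleCat R} (h : IsZero Y) : IsZero (X ⊗ Y) := by
  rw [IsZero.iff_id_eq_zero] at h ⊢
  rw [← MonoidalCategory.whiskerLeft_id, h, MonoidalPreadditive.whiskerLeft_zero]

private lemma f_XIsoOfEq {A B : ChainComplex (ModuleCat R) ℤ} (f : A ⟶ B) {a b : ℤ}
    (h : a = b) :
    f.f a ≫ (B.XIsoOfEq h).hom = (A.XIsoOfEq h).hom ≫ f.f b := by
  subst h; simp [HomologicalComplex.XIsoOfEq]

end Aux

theorem truncation_of_chain_comodule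
    (R : Type) [CommRing R] (n : ℤ)
    (B M L : ChainComplex (ModuleCat R) ℤ)
    -- `B_j = 0` for `j ≥ 0`
    (hB : ∀ j : ℤ, 0 ≤ j → IsZero (B.X j))
    -- the components of the comultiplication of the comonoid `B`
    (δB : ∀ i j : ℤ, B.X (i + j) ⟶ B.X i ⊗ B.X j)
    -- the truncation map `q_n : M ⟶ L_n M`
    (q : M ⟶ L)
    (hsurj : ∀ i : ℤ, Function.Surjective (q.f i))
    (hbij : ∀ i ≤ n, Function.Bijective (q.f i))
    (hker : LinearMap.ker (q.f (n + 1)).hom = LinearMap.ker (M.d (n + 1) n).hom)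
    (hzero : ∀ i > n + 1, IsZero (L.X i))
    -- the components of the coaction `δ : M ⟶ M ⊗ B`
    (δ : ∀ i j : ℤ, M.X (i + j) ⟶ M.X i ⊗ B.X j)
    -- `δ` is a chain map (Koszul sign rule)
    (hδchain : ∀ i j : ℤ,
      M.d (i + 1 + j) (i + j) ≫ δ i j =
        (M.XIsoOfEq (show i + 1 + j = (i + 1) + j by ring)).hom ≫ δ (i + 1) j ≫
            (M.d (i + 1) i ▷ B.X j) +
          (((-1 : ℤˣ) ^ i : ℤˣ) : ℤ) •
            ((M.XIsoOfEq (show i + 1 + j = i + (j + 1) by ring)).hom ≫ δ i (j + 1) ≫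
              (M.X i ◁ B.d (j + 1) j)))
    -- `δ` is coassociative over the comultiplication of `B`
    (hδcoassoc : ∀ i j k : ℤ,
      (M.XIsoOfEq (show i + j + k = (i + j) + k by ring)).hom ≫ δ (i + j) k ≫
          (δ i j ▷ B.X k) =
        (M.XIsoOfEq (show i + j + k = i + (j + k) by ring)).hom ≫ δ i (j + k) ≫
          (M.X i ◁ δB j k) ≫ (α_ (M.X i) (B.X j) (B.X k)).inv) :
    -- Conclusion: the truncated coaction `δ_n` exists, is given by the formula of the
    -- paper, is a chain map, is coassociative, and the square says that
    -- `q_n` is a map of right `B`-comodules.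
    ∃ δn : ∀ i j : ℤ, L.X (i + j) ⟶ L.X i ⊗ B.X j,
      -- the commuting square `q ≫ δ_n = δ ≫ (q ⊗ id_B)`
      (∀ i j : ℤ, q.f (i + j) ≫ δn i j = δ i j ≫ (q.f i ⊗ₘ 𝟙 (B.X j))) ∧
      -- `δ_n = 0` in total degrees `≥ n + 1`
      (∀ i j : ℤ, n + 1 ≤ i + j → δn i j = 0) ∧
      -- `δ_n` is a chain map
      (∀ i j : ℤ,
        L.d (i + 1 + j) (i + j) ≫ δn i j =
          (L.XIsoOfEq (show i + 1 + j = (i + 1) + j by ring)).hom ≫ δn (i + 1) j ≫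
              (L.d (i + 1) i ▷ B.X j) +
            (((-1 : ℤˣ) ^ i : ℤˣ) : ℤ) •
              ((L.XIsoOfEq (show i + 1 + j = i + (j + 1) by ring)).hom ≫ δn i (j + 1) ≫
                (L.X i ◁ B.d (j + 1) j))) ∧
      -- `δ_n` is coassociative over the comultiplication of `B`
      (∀ i j k : ℤ,
        (L.XIsoOfEq (show i + j + k = (i + j) + k by ring)).hom ≫ δn (i + j) k ≫
            (δn i j ▷ B.X k) =
          (L.XIsoOfEq (show i + j + k = i + (j + k) by ring)).hom ≫ δn i (j + k) ≫
            (L.X i ◁ δB j k) ≫ (α_ (L.X i) (B.X j) (B.X k)).inv) := by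
  classical
  -- the target of `δn i j` is zero in total degrees `≥ n + 1`
  have hLB : ∀ i j : ℤ, n + 1 ≤ i + j → IsZero (L.X i ⊗ B.X j) := by
    intro i j hij
    by_cases hj : 0 ≤ j
    · exact isZero_tensor_of_right (hB j hj)
    · exact isZero_tensor_of_left (hzero i (by omega))
  have hiso : ∀ m : ℤ, m ≤ n → IsIso (q.f m) := fun m h =>
    (ConcreteCategory.isIso_iff_bijective _).2 (hbij _ h)
  have hepi : ∀ m : ℤ, Epi (q.f m) := fun m =>
    (ModuleCat.epi_iff_surjective _).2 (hsurj m)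
  -- definition of the truncated coaction
  let δn : ∀ i j : ℤ, L.X (i + j) ⟶ L.X i ⊗ B.X j := fun i j =>
    if h : i + j ≤ n then
      letI := hiso (i + j) h
      inv (q.f (i + j)) ≫ δ i j ≫ (q.f i ⊗ₘ 𝟙 (B.X j))
    else 0
  -- the commuting square
  have hsq : ∀ i j : ℤ, q.f (i + j) ≫ δn i j = δ i j ≫ (q.f i ⊗ₘ 𝟙 (B.X j)) := by
    intro i j
    by_cases h : i + j ≤ n
    · letI := hiso (i + j) h
      simp only [δn, dif_pos h, IsIso.hom_inv_id_assoc]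
    · exact (hLB i j (by omega)).eq_of_tgt _ _
  have hvan : ∀ i j : ℤ, n + 1 ≤ i + j → δn i j = 0 := by
    intro i j h
    simp only [δn, dif_neg (by omega : ¬ i + j ≤ n)]
  refine ⟨δn, hsq, hvan, ?_, ?_⟩
  · -- chain map
    intro i j
    haveI := hepi (i + 1 + j)
    have hsqa := fun i j => reassoc_of% (hsq i j)
    have hfx : ∀ (a b : ℤ) (h : a = b) {Z : ModuleCat R} (g : L.X b ⟶ Z),
        q.f a ≫ (L.XIsoOfEq h).hom ≫ g = (M.XIsoOfEq h).hom ≫ q.f b ≫ g := by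
      intro a b h Z g; subst h; simp [HomologicalComplex.XIsoOfEq]
    rw [← cancel_epi (q.f (i + 1 + j))]
    have h1 : q.f (i + 1 + j) ≫ L.d (i + 1 + j) (i + j) ≫ δn i j
        = M.d (i + 1 + j) (i + j) ≫ δ i j ≫ (q.f i ⊗ₘ 𝟙 (B.X j)) := by
      rw [← Category.assoc, q.comm, Category.assoc, hsq]
    rw [h1, ← Category.assoc, hδchain i j, Preadditive.add_comp, Preadditive.zsmul_comp,
      Preadditive.comp_add, Preadditive.comp_zsmul]
    congr 1
    · -- first term
      rw [hfx _ _ _ _, hsqa]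
      simp only [Category.assoc, MonoidalCategory.tensorHom_id, ← comp_whiskerRight,
        HomologicalComplex.Hom.comm]
    · -- second term
      congr 1
      rw [hfx _ _ _ _, hsqa]
      simp only [Category.assoc, MonoidalCategory.tensorHom_id, whisker_exchange]
  · -- coassociativity
    intro i j k
    haveI := hepi (i + j + k)
    have hsqa := fun i j => reassoc_of% (hsq i j)
    have hfx : ∀ (a b : ℤ) (h : a = b) {Z : ModuleCat R} (g : L.X b ⟶ Z),
        q.f a ≫ (L.XIsoOfEq h).hom ≫ g = (M.XIsoOfEq h).hom ≫ q.f b ≫ g := by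
      intro a b h Z g; subst h; simp [HomologicalComplex.XIsoOfEq]
    rw [← cancel_epi (q.f (i + j + k))]
    rw [hfx _ _ _ _, hfx _ _ _ _, hsqa, hsqa]
    simp only [MonoidalCategory.tensorHom_id]
    simp only [← comp_whiskerRight]
    rw [hsq i j]
    simp only [comp_whiskerRight, Category.assoc, MonoidalCategory.tensorHom_id]
    rw [← whisker_exchange_assoc, associator_inv_naturality_left]
    rw [reassoc_of% (hδcoassoc i j k)]
end

section
/- Let (C, ⊗, 1) be a symmetric monoidal category and L an idempotent monoidal localization object, i.e., an object L1 equipped with a map l : 1 → L1 such that L1 ⊗ l : L1 → L1 ⊗ L1 is an isomorphism. If (X, δ) is a non-counital comonoid in C (δ : X → X ⊗ X coassociative), then L1 ⊗ X carries a coassociative comultiplication Δ defined as the composite L1 ⊗ X → L1 ⊗ X ⊗ X ≅ L1 ⊗ L1 ⊗ X ⊗ X ≅ (L1 ⊗ X) ⊗ (L1 ⊗ X) (using id ⊗ δ, the inverse of the idempotency isomorphism, and the symmetry), and the map l ⊗ X : X → L1 ⊗ X is a map of non-counital comonoids. -/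
/-!
STATEMENT 7: Let `(C, ⊗, 1)` be a symmetric monoidal category and `L1` an idempotent
monoidal localization object: `l : 1 ⟶ L1` such that `L1 ⊗ l : L1 ⟶ L1 ⊗ L1` is an
isomorphism.  If `(X, δ)` is a non-counital comonoid (`δ : X ⟶ X ⊗ X` coassociative),
then `L1 ⊗ X` carries a coassociative comultiplication `Δ` defined as the composite
`L1 ⊗ X → L1 ⊗ (X ⊗ X) → (L1 ⊗ L1) ⊗ (X ⊗ X) ≅ (L1 ⊗ X) ⊗ (L1 ⊗ X)`
(using `id ⊗ δ`, the idempotency isomorphism, and the symmetry), and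
`l ⊗ X : X → L1 ⊗ X` is a map of non-counital comonoids.
-/

open CategoryTheory MonoidalCategory

universe v u

variable {C : Type u} [Category.{v} C] [MonoidalCategory C] [SymmetricCategory C]

/-- The middle-four interchange isomorphism built from the associators and the symmetry. -/
noncomputable def middleFour (A B D E : C) : (A ⊗ B) ⊗ (D ⊗ E) ≅ (A ⊗ D) ⊗ (B ⊗ E) :=
  α_ A B (D ⊗ E) ≪≫
    whiskerLeftIso A ((α_ B D E).symm ≪≫ whiskerRightIso (β_ B D) E ≪≫ α_ D B E) ≪≫
    (α_ A D (B ⊗ E)).symm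

/-- The idempotency map `L1 ⊗ l : L1 ⟶ L1 ⊗ L1`. -/
noncomputable def idem (L1 : C) (l : 𝟙_ C ⟶ L1) : L1 ⟶ L1 ⊗ L1 :=
  (ρ_ L1).inv ≫ (L1 ◁ l)

/-- The localization map `l ⊗ X : X ⟶ L1 ⊗ X`. -/
noncomputable def locMap (L1 X : C) (l : 𝟙_ C ⟶ L1) : X ⟶ L1 ⊗ X :=
  (λ_ X).inv ≫ (l ▷ X)

/-- The comultiplication `Δ` on `L1 ⊗ X`, defined as in the paper:
`L1 ⊗ X → L1 ⊗ (X ⊗ X) → (L1 ⊗ L1) ⊗ (X ⊗ X) ≅ (L1 ⊗ X) ⊗ (L1 ⊗ X)`. -/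
noncomputable def smashComul (L1 X : C) (l : 𝟙_ C ⟶ L1) (δ : X ⟶ X ⊗ X) :
    L1 ⊗ X ⟶ (L1 ⊗ X) ⊗ (L1 ⊗ X) :=
  (L1 ◁ δ) ≫ (idem L1 l ▷ (X ⊗ X)) ≫ (middleFour L1 L1 X X).hom

/-- `middleFour` coincides with Mathlib's `tensorμ`. -/
theorem middleFour_hom_eq_tensorμ (A B D E : C) :
    (middleFour A B D E).hom = tensorμ A B D E := by
  simp [middleFour, tensorμ]

/-- `smashComul` is the tensor product of the comultiplications `idem` and `δ`
followed by the tensor strength. -/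
theorem smashComul_eq (L1 X : C) (l : 𝟙_ C ⟶ L1) (δ : X ⟶ X ⊗ X) :
    smashComul L1 X l δ = (idem L1 l ⊗ₘ δ) ≫ tensorμ L1 L1 X X := by
  rw [smashComul, middleFour_hom_eq_tensorμ, tensorHom_def']
  simp [Category.assoc]

theorem l_comp_idem (L1 : C) (l : 𝟙_ C ⟶ L1) :
    l ≫ idem L1 l = (λ_ (𝟙_ C)).inv ≫ (l ⊗ₘ l) := by
  rw [idem, rightUnitor_inv_naturality_assoc, ← MonoidalCategory.tensorHom_def, unitors_inv_equal]

theorem l_comp_idem' (L1 : C) (l : 𝟙_ C ⟶ L1) :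
    l ≫ (λ_ L1).inv ≫ (l ▷ L1) = (λ_ (𝟙_ C)).inv ≫ (l ⊗ₘ l) := by
  rw [leftUnitor_inv_naturality_assoc, ← tensorHom_def']

/-- The idempotency map is coassociative. -/
theorem idem_coassoc (L1 : C) (l : 𝟙_ C ⟶ L1) :
    idem L1 l ≫ (idem L1 l ▷ L1) ≫ (α_ L1 L1 L1).hom
    = idem L1 l ≫ (L1 ◁ idem L1 l) := by
  have h := (l_comp_idem' L1 l).trans (l_comp_idem L1 l).symm
  rw [idem] at h ⊢
  simp only [comp_whiskerRight, Category.assoc, MonoidalCategory.whiskerLeft_comp]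
  rw [associator_naturality_middle, triangle_assoc_comp_right_inv_assoc]
  simp only [← MonoidalCategory.whiskerLeft_comp, Category.assoc]
  rw [h]

/-- The tensor product of two coassociative comultiplications (via `tensorμ`)
is coassociative. -/
theorem tensor_comul_coassoc {A B : C} (a : A ⟶ A ⊗ A) (b : B ⟶ B ⊗ B)
    (ha : a ≫ (a ▷ A) ≫ (α_ A A A).hom = a ≫ (A ◁ a))
    (hb : b ≫ (b ▷ B) ≫ (α_ B B B).hom = b ≫ (B ◁ b)) :
    ((a ⊗ₘ b) ≫ tensorμ A A B B) ≫ (((a ⊗ₘ b) ≫ tensorμ A A B B) ▷ (A ⊗ B)) ≫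
        (α_ (A ⊗ B) (A ⊗ B) (A ⊗ B)).hom =
      ((a ⊗ₘ b) ≫ tensorμ A A B B) ≫ ((A ⊗ B) ◁ ((a ⊗ₘ b) ≫ tensorμ A A B B)) := by
  have key1 : tensorμ A A B B ≫ ((a ⊗ₘ b) ▷ (A ⊗ B)) =
      ((a ▷ A) ⊗ₘ (b ▷ B)) ≫ tensorμ (A ⊗ A) A (B ⊗ B) B := by
    have := tensorμ_natural a (𝟙 A) b (𝟙 B)
    simpa [tensorHom_id, id_tensorHom] using this.symm
  have key2 : tensorμ A A B B ≫ ((A ⊗ B) ◁ (a ⊗ₘ b)) =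
      ((A ◁ a) ⊗ₘ (B ◁ b)) ≫ tensorμ A (A ⊗ A) B (B ⊗ B) := by
    have := tensorμ_natural (𝟙 A) a (𝟙 B) b
    simpa [tensorHom_id, id_tensorHom] using this.symm
  calc ((a ⊗ₘ b) ≫ tensorμ A A B B) ≫ (((a ⊗ₘ b) ≫ tensorμ A A B B) ▷ (A ⊗ B)) ≫
        (α_ (A ⊗ B) (A ⊗ B) (A ⊗ B)).hom
      = (a ⊗ₘ b) ≫ (tensorμ A A B B ≫ ((a ⊗ₘ b) ▷ (A ⊗ B))) ≫
          (tensorμ A A B B ▷ (A ⊗ B)) ≫ (α_ (A ⊗ B) (A ⊗ B) (A ⊗ B)).hom := by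
        simp [comp_whiskerRight, Category.assoc]
    _ = (a ⊗ₘ b) ≫ ((a ▷ A) ⊗ₘ (b ▷ B)) ≫ tensorμ (A ⊗ A) A (B ⊗ B) B ≫
          (tensorμ A A B B ▷ (A ⊗ B)) ≫ (α_ (A ⊗ B) (A ⊗ B) (A ⊗ B)).hom := by
        rw [key1]; simp [Category.assoc]
    _ = (a ⊗ₘ b) ≫ ((a ▷ A) ⊗ₘ (b ▷ B)) ≫ ((α_ A A A).hom ⊗ₘ (α_ B B B).hom) ≫
          tensorμ A (A ⊗ A) B (B ⊗ B) ≫ ((A ⊗ B) ◁ tensorμ A A B B) := by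
        rw [associator_monoidal]
    _ = ((a ≫ (a ▷ A) ≫ (α_ A A A).hom) ⊗ₘ (b ≫ (b ▷ B) ≫ (α_ B B B).hom)) ≫
          tensorμ A (A ⊗ A) B (B ⊗ B) ≫ ((A ⊗ B) ◁ tensorμ A A B B) := by
        simp only [← tensorHom_comp_tensorHom, Category.assoc]
    _ = ((a ≫ (A ◁ a)) ⊗ₘ (b ≫ (B ◁ b))) ≫
          tensorμ A (A ⊗ A) B (B ⊗ B) ≫ ((A ⊗ B) ◁ tensorμ A A B B) := by
        rw [ha, hb]
    _ = (a ⊗ₘ b) ≫ (tensorμ A A B B ≫ ((A ⊗ B) ◁ (a ⊗ₘ b))) ≫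
          ((A ⊗ B) ◁ tensorμ A A B B) := by
        rw [key2]; simp only [← tensorHom_comp_tensorHom, Category.assoc]
    _ = ((a ⊗ₘ b) ≫ tensorμ A A B B) ≫ ((A ⊗ B) ◁ ((a ⊗ₘ b) ≫ tensorμ A A B B)) := by
        simp [MonoidalCategory.whiskerLeft_comp, Category.assoc]

theorem smashing_localization_preserves_comonoids
    (L1 : C) (l : 𝟙_ C ⟶ L1)
    -- idempotency: `L1 ⊗ l` is an isomorphism
    (hidem : IsIso (idem L1 l))
    (X : C) (δ : X ⟶ X ⊗ X)
    -- coassociativity of `δ`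
    (hδ : δ ≫ (δ ▷ X) ≫ (α_ X X X).hom = δ ≫ (X ◁ δ)) :
    -- `Δ` is coassociative, and `l ⊗ X` is a map of non-counital comonoids
    (smashComul L1 X l δ ≫ (smashComul L1 X l δ ▷ (L1 ⊗ X)) ≫
        (α_ (L1 ⊗ X) (L1 ⊗ X) (L1 ⊗ X)).hom =
      smashComul L1 X l δ ≫ ((L1 ⊗ X) ◁ smashComul L1 X l δ)) ∧
    (locMap L1 X l ≫ smashComul L1 X l δ =
      δ ≫ (locMap L1 X l ⊗ₘ locMap L1 X l)) := by
  constructor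
  · rw [smashComul_eq]
    exact tensor_comul_coassoc (idem L1 l) δ (idem_coassoc L1 l) hδ
  · rw [smashComul_eq, locMap]
    have hunit : (λ_ (X ⊗ X)).inv ≫ ((λ_ (𝟙_ C)).inv ▷ (X ⊗ X)) ≫
        tensorμ (𝟙_ C) (𝟙_ C) X X = ((λ_ X).inv ⊗ₘ (λ_ X).inv) := by
      rw [← cancel_epi (λ_ (X ⊗ X)).hom, Iso.hom_inv_id_assoc, tensor_left_unitality]
      simp [tensorHom_comp_tensorHom]
    calc ((λ_ X).inv ≫ (l ▷ X)) ≫ (idem L1 l ⊗ₘ δ) ≫ tensorμ L1 L1 X X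
        = (λ_ X).inv ≫ ((l ≫ idem L1 l) ⊗ₘ (𝟙 X ≫ δ)) ≫ tensorμ L1 L1 X X := by
          simp only [Category.assoc, ← tensorHom_id, tensorHom_comp_tensorHom_assoc]
      _ = (λ_ X).inv ≫ (((λ_ (𝟙_ C)).inv ⊗ₘ δ) ≫ ((l ⊗ₘ l) ▷ (X ⊗ X))) ≫
            tensorμ L1 L1 X X := by
          rw [l_comp_idem, Category.id_comp, tensorHom_def' ((λ_ (𝟙_ C)).inv ≫ (l ⊗ₘ l)) δ]
          simp [Category.assoc, tensorHom_def']
      _ = (λ_ X).inv ≫ ((λ_ (𝟙_ C)).inv ⊗ₘ δ) ≫ tensorμ (𝟙_ C) (𝟙_ C) X X ≫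
            ((l ▷ X) ⊗ₘ (l ▷ X)) := by
          rw [Category.assoc, tensorμ_natural_left]
      _ = δ ≫ ((λ_ X).inv ⊗ₘ (λ_ X).inv) ≫ ((l ▷ X) ⊗ₘ (l ▷ X)) := by
          rw [tensorHom_def' (λ_ (𝟙_ C)).inv δ]
          simp only [Category.assoc]
          rw [← leftUnitor_inv_naturality_assoc]
          conv_rhs => rw [← hunit]
          simp only [Category.assoc]
      _ = δ ≫ (((λ_ X).inv ≫ (l ▷ X)) ⊗ₘ ((λ_ X).inv ≫ (l ▷ X))) := by
          rw [tensorHom_comp_tensorHom]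
end
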